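/- For all real x, y and λ > 0, ∫_y^∞ Φ(λ + (x−z)/(2λ)) e^{−z} (1 − z²/2) dz = −(y²/2 + y) e^{−y} Φ(λ + (x−y)/(2λ)) + (2λ⁴ − 2λ²x + x + x²/2) e^{−x} (1 − Φ(λ + (y−x)/(2λ))) + (−2λ³ + λx + λy + 2λ) e^{−x} φ(λ + (y−x)/(2λ)). -/

import Mathlib

open Real MeasureTheory Filter Set Topology

/-- Standard normal density. -/
noncomputable def phi (t : ℝ) : ℝ := (Real.sqrt (2 * Real.pi))⁻¹ * Real.exp (-t ^ 2 / 2)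

/-- Standard normal distribution function. -/
noncomputable def Phi (t : ℝ) : ℝ := ∫ s in Set.Iic t, phi s

lemma phi_cont : Continuous phi := by
  unfold phi; fun_prop

lemma phi_nonneg (t : ℝ) : 0 ≤ phi t := by
  unfold phi; positivity

lemma integrable_phi : Integrable phi := by
  have h := (integrable_exp_neg_mul_sq (show (0:ℝ) < 1/2 by norm_num)).const_mul
    ((Real.sqrt (2*Real.pi))⁻¹)
  exact h.congr (Filter.Eventually.of_forall fun t => by
    show (Real.sqrt (2*Real.pi))⁻¹ * Real.exp (-(1/2) * t^2) = phi t
    rw [phi, show (-(1/2) * t^2 : ℝ) = -t^2/2 by ring])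

lemma integral_phi : ∫ t, phi t = 1 := by
  unfold phi
  rw [MeasureTheory.integral_const_mul]
  have h : ∫ t : ℝ, Real.exp (-t^2/2) = Real.sqrt (2 * Real.pi) := by
    have := integral_gaussian (1/2)
    rw [show (Real.pi / (1/2)) = 2 * Real.pi by ring] at this
    rw [← this]
    congr 1; funext t; congr 1; ring
  rw [h, inv_mul_cancel₀ (Real.sqrt_ne_zero'.2 (by positivity))]

lemma hasDerivAt_Phi (t : ℝ) : HasDerivAt Phi (phi t) t := by
  have heq : Phi = fun s => Phi 0 + ∫ u in (0:ℝ)..s, phi u := by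
    funext s
    rw [← intervalIntegral.integral_Iic_sub_Iic integrable_phi.integrableOn
      integrable_phi.integrableOn]
    simp [Phi]
  rw [heq]
  exact (intervalIntegral.integral_hasDerivAt_right
    integrable_phi.intervalIntegrable
    (phi_cont.stronglyMeasurableAtFilter _ _)
    phi_cont.continuousAt).const_add _

lemma Phi_nonneg (t : ℝ) : 0 ≤ Phi t :=
  MeasureTheory.setIntegral_nonneg measurableSet_Iic fun s _ => phi_nonneg s

lemma Phi_le_one (t : ℝ) : Phi t ≤ 1 := by
  rw [← integral_phi]
  exact MeasureTheory.setIntegral_le_integral integrable_phi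
    (Filter.Eventually.of_forall phi_nonneg)

lemma Phi_tendsto_one : Tendsto Phi atTop (𝓝 1) := by
  rw [← integral_phi]
  exact (MeasureTheory.aecover_Iic (tendsto_id (α := ℝ))).integral_tendsto_of_countably_generated
    integrable_phi

lemma hasDerivAt_phi (t : ℝ) : HasDerivAt phi (-t * phi t) t := by
  unfold phi
  have h1 : HasDerivAt (fun t : ℝ => -t^2/2) (-t) t := by
    have := ((hasDerivAt_pow 2 t).neg).div_const 2
    exact this.congr_deriv (by push_cast; ring)
  have := (Real.hasDerivAt_exp (-t^2/2)).comp t h1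
  have h2 := this.const_mul ((Real.sqrt (2*Real.pi))⁻¹)
  exact h2.congr_deriv (by ring)

lemma tendsto_mul_gauss : Tendsto (fun t : ℝ => t * Real.exp (-t^2/2)) atTop (𝓝 0) := by
  apply squeeze_zero' (Filter.eventually_atTop.2 ⟨0, fun t ht => by positivity⟩)
    (Filter.eventually_atTop.2 ⟨2, fun t ht => ?_⟩)
    (by simpa using tendsto_pow_mul_exp_neg_atTop_nhds_zero 1)
  have h : -t^2/2 ≤ -t := by nlinarith
  have := Real.exp_le_exp.2 h
  nlinarith [Real.exp_pos (-t^2/2), Real.exp_pos (-t)]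

lemma phi_tendsto_zero : Tendsto phi atTop (𝓝 0) := by
  unfold phi
  rw [show (0:ℝ) = (Real.sqrt (2*Real.pi))⁻¹ * 0 by ring]
  apply Tendsto.const_mul
  apply Real.tendsto_exp_atBot.comp
  have h : Tendsto (fun t : ℝ => t^2/2) atTop atTop :=
    (tendsto_pow_atTop two_ne_zero).atTop_div_const (by norm_num)
  have := tendsto_neg_atTop_atBot.comp h
  convert this using 1; funext t; simp [neg_div]

lemma tendsto_mul_phi : Tendsto (fun t : ℝ => t * phi t) atTop (𝓝 0) := by
  unfold phi
  have := tendsto_mul_gauss.const_mul ((Real.sqrt (2*Real.pi))⁻¹)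
  rw [mul_zero] at this
  exact this.congr fun t => by ring

theorem stmt5 (x y l : ℝ) (hl : 0 < l) :
    (∫ z in Set.Ioi y, Phi (l + (x - z) / (2 * l)) * Real.exp (-z) * (1 - z ^ 2 / 2))
      = -(y ^ 2 / 2 + y) * Real.exp (-y) * Phi (l + (x - y) / (2 * l))
        + (2 * l ^ 4 - 2 * l ^ 2 * x + x + x ^ 2 / 2) * Real.exp (-x)
          * (1 - Phi (l + (y - x) / (2 * l)))
        + (-2 * l ^ 3 + l * x + l * y + 2 * l) * Real.exp (-x)
          * phi (l + (y - x) / (2 * l)) := by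
  have hlne : l ≠ 0 := hl.ne'
  set F : ℝ → ℝ := fun z => -(z ^ 2 / 2 + z) * Real.exp (-z) * Phi (l + (x - z) / (2 * l))
        + (2 * l ^ 4 - 2 * l ^ 2 * x + x + x ^ 2 / 2) * Real.exp (-x)
          * (1 - Phi (l + (z - x) / (2 * l)))
        + (-2 * l ^ 3 + l * x + l * z + 2 * l) * Real.exp (-x)
          * phi (l + (z - x) / (2 * l)) with hFdef
  -- key exponential identity
  have key : ∀ z : ℝ, Real.exp (-z) * phi (l + (x - z) / (2 * l))
      = Real.exp (-x) * phi (l + (z - x) / (2 * l)) := by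
    intro z
    unfold phi
    have h2 : Real.exp (-z) * Real.exp (-(l + (x - z) / (2 * l)) ^ 2 / 2)
        = Real.exp (-x) * Real.exp (-(l + (z - x) / (2 * l)) ^ 2 / 2) := by
      rw [← Real.exp_add, ← Real.exp_add]
      congr 1
      field_simp
      ring
    linear_combination (Real.sqrt (2 * Real.pi))⁻¹ * h2
  have hr : ∀ z : ℝ, phi (l + (z - x) / (2 * l))
      = Real.exp (-z) * phi (l + (x - z) / (2 * l)) * Real.exp x := by
    intro z
    have hE : Real.exp (-x) * Real.exp x = 1 := by
      rw [← Real.exp_add]; simp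
    linear_combination (-(Real.exp x)) * (key z) - phi (l + (z - x) / (2 * l)) * hE
  -- derivative of F
  have hF : ∀ z : ℝ, HasDerivAt F
      (-(Phi (l + (x - z) / (2 * l)) * Real.exp (-z) * (1 - z ^ 2 / 2))) z := by
    intro z
    have h1 : HasDerivAt (fun z : ℝ => -(z ^ 2 / 2 + z)) (-(z + 1)) z := by
      have := (((hasDerivAt_pow 2 z).div_const 2).add (hasDerivAt_id z)).neg
      exact this.congr_deriv (by push_cast; ring)
    have hexp : HasDerivAt (fun z : ℝ => Real.exp (-z)) (-Real.exp (-z)) z := by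
      have := (Real.hasDerivAt_exp (-z)).comp z (hasDerivAt_neg z)
      exact this.congr_deriv (by ring)
    have hu : HasDerivAt (fun z : ℝ => l + (x - z) / (2 * l)) (-(1 / (2 * l))) z := by
      have := (((hasDerivAt_id z).const_sub x).div_const (2 * l)).const_add l
      exact this.congr_deriv (by ring)
    have hv : HasDerivAt (fun z : ℝ => l + (z - x) / (2 * l)) (1 / (2 * l)) z := by
      have := (((hasDerivAt_id z).sub_const x).div_const (2 * l)).const_add l
      exact this.congr_deriv (by ring)
    have hPu := (hasDerivAt_Phi (l + (x - z) / (2 * l))).comp z hu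
    have hPv := (hasDerivAt_Phi (l + (z - x) / (2 * l))).comp z hv
    have hphiv := (hasDerivAt_phi (l + (z - x) / (2 * l))).comp z hv
    have hc : HasDerivAt (fun z : ℝ => -2 * l ^ 3 + l * x + l * z + 2 * l) l z := by
      have := (((hasDerivAt_id z).const_mul l).const_add (-2 * l ^ 3 + l * x)).add_const (2 * l)
      exact this.congr_deriv (by ring)
    have term1 := (h1.mul hexp).mul hPu
    have term2 := ((hasDerivAt_const z (1 : ℝ)).sub hPv).const_mul
      ((2 * l ^ 4 - 2 * l ^ 2 * x + x + x ^ 2 / 2) * Real.exp (-x))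
    have term3 := (hc.mul_const (Real.exp (-x))).mul hphiv
    have total := (term1.add term2).add term3
    refine total.congr_deriv ?_
    simp only [Function.comp, Pi.mul_apply]
    rw [hr z, Real.exp_neg x]
    set P := Phi (l + (x - z) / (2 * l)) with hP
    set q := phi (l + (x - z) / (2 * l)) with hq
    have hA : Real.exp x ≠ 0 := Real.exp_ne_zero x
    field_simp
    ring
  -- limit of F at infinity
  have hvtop : Tendsto (fun z : ℝ => l + (z - x) / (2 * l)) atTop atTop := by
    apply tendsto_atTop_add_const_left
    apply Tendsto.atTop_div_const (by positivity : (0 : ℝ) < 2 * l)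
    simp only [sub_eq_add_neg]
    exact tendsto_atTop_add_const_right _ (-x) tendsto_id
  have h1t : Tendsto (fun z : ℝ => -(z ^ 2 / 2 + z) * Real.exp (-z)
      * Phi (l + (x - z) / (2 * l))) atTop (𝓝 0) := by
    have ha : Tendsto (fun z : ℝ => -(z ^ 2 / 2 + z) * Real.exp (-z)) atTop (𝓝 0) := by
      have h2 := (tendsto_pow_mul_exp_neg_atTop_nhds_zero 2).const_mul (-(1 / 2) : ℝ)
      have h1' := (tendsto_pow_mul_exp_neg_atTop_nhds_zero 1).const_mul (-1 : ℝ)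
      have h := h2.add h1'
      simp only [mul_zero, add_zero] at h
      exact h.congr fun z => by ring
    have hb : Filter.IsBoundedUnder (· ≤ ·) atTop
        (fun z : ℝ => ‖Phi (l + (x - z) / (2 * l))‖) := by
      apply Filter.isBoundedUnder_of
      exact ⟨1, fun z => by
        rw [Real.norm_eq_abs, abs_le]
        exact ⟨by linarith [Phi_nonneg (l + (x - z) / (2 * l))], Phi_le_one _⟩⟩
    exact ha.zero_mul_isBoundedUnder_le hb
  have h2t : Tendsto (fun z : ℝ => (2 * l ^ 4 - 2 * l ^ 2 * x + x + x ^ 2 / 2) * Real.exp (-x)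
      * (1 - Phi (l + (z - x) / (2 * l)))) atTop (𝓝 0) := by
    have hsub : Tendsto (fun z : ℝ => 1 - Phi (l + (z - x) / (2 * l))) atTop (𝓝 (1 - 1)) :=
      Tendsto.sub (tendsto_const_nhds (α := ℝ)) (Phi_tendsto_one.comp hvtop)
    have h := hsub.const_mul ((2 * l ^ 4 - 2 * l ^ 2 * x + x + x ^ 2 / 2) * Real.exp (-x))
    simp only [sub_self, mul_zero] at h
    exact h.congr fun z => by simp [Function.comp]
  have h3t : Tendsto (fun z : ℝ => (-2 * l ^ 3 + l * x + l * z + 2 * l) * Real.exp (-x)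
      * phi (l + (z - x) / (2 * l))) atTop (𝓝 0) := by
    have hg : Tendsto (fun t : ℝ => ((-4 * l ^ 3 + 2 * l * x + 2 * l) + 2 * l ^ 2 * t) * phi t)
        atTop (𝓝 0) := by
      have h := (phi_tendsto_zero.const_mul (-4 * l ^ 3 + 2 * l * x + 2 * l)).add
        (tendsto_mul_phi.const_mul (2 * l ^ 2))
      simp only [mul_zero, add_zero] at h
      exact h.congr fun t => by ring
    have hcomp := (hg.comp hvtop).const_mul (Real.exp (-x))
    rw [mul_zero] at hcomp
    refine hcomp.congr fun z => ?_
    simp only [Function.comp]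
    field_simp
    ring
  have htend : Tendsto F atTop (𝓝 0) := by
    have h := (h1t.add h2t).add h3t
    simp only [add_zero] at h
    exact h
  -- integrability
  have hPhiCont : Continuous Phi :=
    continuous_iff_continuousAt.mpr fun t => (hasDerivAt_Phi t).continuousAt
  have hfc : Continuous (fun z : ℝ => Phi (l + (x - z) / (2 * l)) * Real.exp (-z)
      * (1 - z ^ 2 / 2)) := by
    apply Continuous.mul
    · exact (hPhiCont.comp (by fun_prop)).mul (by fun_prop)
    · fun_prop
  have hint : IntegrableOn (fun z : ℝ => Phi (l + (x - z) / (2 * l)) * Real.exp (-z)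
      * (1 - z ^ 2 / 2)) (Ioi y) := by
    rw [← Set.Ioc_union_Ioi_eq_Ioi (le_max_left y 0)]
    apply MeasureTheory.IntegrableOn.union
    · exact hfc.integrableOn_Ioc
    · have hg1 : IntegrableOn (fun z : ℝ => Real.exp (-z)) (Ioi (max y 0)) := by
        have := exp_neg_integrableOn_Ioi (max y 0) (one_pos)
        exact this.congr_fun (fun z _ => by norm_num) measurableSet_Ioi
      have hg2 : IntegrableOn (fun z : ℝ => z ^ 2 * Real.exp (-z)) (Ioi (max y 0)) := by
        have h := integrableOn_rpow_mul_exp_neg_rpow (by norm_num : (-1 : ℝ) < 2) one_pos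
        have h2 : IntegrableOn (fun z : ℝ => z ^ 2 * Real.exp (-z)) (Ioi 0) := by
          refine h.congr_fun (fun z _ => ?_) measurableSet_Ioi
          show z ^ (2:ℝ) * Real.exp (-z ^ (1:ℝ)) = _
          rw [Real.rpow_one, show (2 : ℝ) = ((2 : ℕ) : ℝ) by norm_num, Real.rpow_natCast]
        exact h2.mono_set (Set.Ioi_subset_Ioi (le_max_right y 0))
      apply MeasureTheory.Integrable.mono' (hg1.add hg2)
        (hfc.aestronglyMeasurable.restrict)
      refine Filter.Eventually.of_forall fun z => ?_
      show _ ≤ Real.exp (-z) + z ^ 2 * Real.exp (-z)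
      have hP0 := Phi_nonneg (l + (x - z) / (2 * l))
      have hP1 := Phi_le_one (l + (x - z) / (2 * l))
      have he := Real.exp_pos (-z)
      rw [Real.norm_eq_abs, abs_mul, abs_mul,
        abs_of_nonneg hP0, abs_of_nonneg he.le]
      have habs : |1 - z ^ 2 / 2| ≤ 1 + z ^ 2 := by
        rw [abs_le]; constructor <;> nlinarith [sq_nonneg z]
      have h1 : Phi (l + (x - z) / (2 * l)) * Real.exp (-z) ≤ Real.exp (-z) := by
        nlinarith
      have step1 : Phi (l + (x - z) / (2 * l)) * Real.exp (-z) * |1 - z ^ 2 / 2|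
          ≤ Real.exp (-z) * (1 + z ^ 2) :=
        mul_le_mul h1 habs (abs_nonneg _) he.le
      nlinarith [step1]
  -- conclude
  have main := integral_Ioi_of_hasDerivAt_of_tendsto
    ((hF y).continuousAt.continuousWithinAt) (fun z _ => hF z) hint.neg htend
  rw [MeasureTheory.integral_neg] at main
  have : (∫ z in Set.Ioi y, Phi (l + (x - z) / (2 * l)) * Real.exp (-z) * (1 - z ^ 2 / 2))
      = F y := by linarith
  rw [this]
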